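/- Let $\{X_k, \mathcal{F}_k\}_{k=0}^n$ be a discrete-parameter real-valued martingale such that almost surely $|X_k - X_{k-1}| \le d$ and $\mathbb{E}[(X_k - X_{k-1})^2 \mid \mathcal{F}_{k-1}] \le \sigma^2$ for every $k \in \{1,\dots,n\}$, for constants $d, \sigma > 0$. Let $\gamma = \sigma^2/d^2$ and $\delta = \alpha/d$. Then for every $\alpha \ge 0$ with $\delta \le 1$, $\Pr(X_n - X_0 \ge \alpha n) \le \exp\left(-n\, D\left(\frac{\delta+\gamma}{1+\gamma} \,\Big\|\, \frac{\gamma}{1+\gamma}\right)\right)$, where $D(p\|q) = p\ln(p/q) + (1-p)\ln((1-p)/(1-q))$ is the binary relative entropy. -/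

import Mathlib

open MeasureTheory

/-- Binary relative entropy (KL divergence between Bernoulli(p) and Bernoulli(q)). -/
noncomputable def binKL (p q : ℝ) : ℝ :=
  p * Real.log (p / q) + (1 - p) * Real.log ((1 - p) / (1 - q))


noncomputable def Jfun (x : ℝ) : ℝ := ∫ w in (0:ℝ)..1, (1 - w) * Real.exp (x * w)

lemma Jfun_nonneg (x : ℝ) : 0 ≤ Jfun x := by
  apply intervalIntegral.integral_nonneg (by norm_num)
  intro w hw
  exact mul_nonneg (by linarith [hw.2]) (Real.exp_nonneg _)

lemma Jfun_cont (x : ℝ) : Continuous fun w : ℝ => (1 - w) * Real.exp (x * w) := by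
  continuity

lemma Jfun_mono {x y : ℝ} (h : x ≤ y) : Jfun x ≤ Jfun y := by
  apply intervalIntegral.integral_mono_on (by norm_num)
    ((Jfun_cont x).intervalIntegrable _ _) ((Jfun_cont y).intervalIntegrable _ _)
  intro w hw
  rw [Set.mem_Icc] at hw
  have : x * w ≤ y * w := mul_le_mul_of_nonneg_right h hw.1
  exact mul_le_mul_of_nonneg_left (Real.exp_le_exp.2 this) (by linarith [hw.2])

lemma exp_eq_Jfun (x : ℝ) : Real.exp x = 1 + x + x^2 * Jfun x := by
  rcases eq_or_ne x 0 with rfl | hx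
  · simp
  · have key : Jfun x = (Real.exp x / x^2) - (1/x + 1/x^2) := by
      have hderiv : ∀ w ∈ Set.uIcc (0:ℝ) 1, HasDerivAt
          (fun w => (1 - w) * Real.exp (x * w) / x + Real.exp (x * w) / x^2)
          ((1 - w) * Real.exp (x * w)) w := by
        intro w _
        have h1 : HasDerivAt (fun w : ℝ => x * w) x w := by
          simpa using (hasDerivAt_id w).const_mul x
        have h2 : HasDerivAt (fun w => Real.exp (x * w)) (Real.exp (x * w) * x) w :=
          (Real.hasDerivAt_exp (x * w)).comp w h1
        have h3 : HasDerivAt (fun w : ℝ => (1 - w)) (-1) w := by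
          simpa using ((hasDerivAt_id w).const_sub 1)
        have h4 : HasDerivAt (fun w => (1 - w) * Real.exp (x * w))
            ((-1) * Real.exp (x * w) + (1 - w) * (Real.exp (x * w) * x)) w := h3.mul h2
        have h5 := (h4.div_const x).add (h2.div_const (x^2))
        refine h5.congr_deriv ?_
        rw [div_add_div _ _ hx (pow_ne_zero 2 hx), div_eq_iff (mul_ne_zero hx (pow_ne_zero 2 hx))]
        ring
      have := intervalIntegral.integral_eq_sub_of_hasDerivAt hderiv
        ((Jfun_cont x).intervalIntegrable _ _)
      rw [Jfun, this]
      simp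
    rw [key]
    field_simp
    ring

lemma key_pointwise {u a b y : ℝ} (hu : 0 ≤ u) (hab : a ≤ b) (hy : y ≤ b) :
    Real.exp (u * y) ≤
      Real.exp (u * a) * (1 + u * (y - a) + u^2 * Jfun (u * (b - a)) * (y - a)^2) := by
  have h1 : Real.exp (u * y) = Real.exp (u * a) * Real.exp (u * (y - a)) := by
    rw [← Real.exp_add]; ring_nf
  rw [h1, exp_eq_Jfun (u * (y - a))]
  apply mul_le_mul_of_nonneg_left _ (Real.exp_nonneg _)
  have hJ : Jfun (u * (y - a)) ≤ Jfun (u * (b - a)) :=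
    Jfun_mono (mul_le_mul_of_nonneg_left (by linarith) hu)
  nlinarith [sq_nonneg (y - a), sq_nonneg u, Jfun_nonneg (u * (y-a))]

lemma alg_ident (u d σ : ℝ) (hd : 0 < d) (hσ : 0 < σ) :
    Real.exp (u * (-(σ^2/d))) * (1 - u * (-(σ^2/d)) +
        u^2 * Jfun (u * (d - -(σ^2/d))) * ((-(σ^2/d))^2 + σ^2)) =
      d^2/(d^2+σ^2) * Real.exp (u * (-(σ^2/d))) + σ^2/(d^2+σ^2) * Real.exp (u * d) := by
  have hds : (0:ℝ) < d^2 + σ^2 := by positivity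
  have hexp : Real.exp (u * d) = Real.exp (u * (-(σ^2/d))) *
      (1 + u * (d - -(σ^2/d)) + (u * (d - -(σ^2/d)))^2 * Jfun (u * (d - -(σ^2/d)))) := by
    rw [← exp_eq_Jfun, ← Real.exp_add]; ring_nf
  rw [hexp]
  field_simp
  ring

lemma step_bound {Ω : Type*} {m0 : MeasurableSpace Ω} {μ : Measure Ω} [IsProbabilityMeasure μ]
    (ℱ : Filtration ℕ m0) (X : ℕ → Ω → ℝ) (hmart : Martingale X ℱ μ)
    (d σ u : ℝ) (hd : 0 < d) (hσ : 0 < σ) (hu : 0 ≤ u) (k : ℕ)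
    (hjump : ∀ᵐ ω ∂μ, |X (k+1) ω - X k ω| ≤ d)
    (hvar : ∀ᵐ ω ∂μ, (μ[fun ω => (X (k+1) ω - X k ω) ^ 2 | ℱ k]) ω ≤ σ ^ 2) :
    ∀ᵐ ω ∂μ, (μ[fun ω => Real.exp (u * (X (k+1) ω - X k ω)) | ℱ k]) ω ≤
      d^2/(d^2+σ^2) * Real.exp (u * (-(σ^2/d))) + σ^2/(d^2+σ^2) * Real.exp (u * d) := by
  set a : ℝ := -(σ^2/d) with ha
  set K : ℝ := u^2 * Jfun (u * (d - a)) with hK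
  have hK0 : 0 ≤ K := mul_nonneg (sq_nonneg u) (Jfun_nonneg _)
  set Δ : Ω → ℝ := fun ω => X (k+1) ω - X k ω with hΔ
  have hΔmeas : StronglyMeasurable Δ :=
    ((hmart.stronglyAdapted (k+1)).mono (ℱ.le _)).sub ((hmart.stronglyAdapted k).mono (ℱ.le _))
  have hΔint : Integrable Δ μ := (hmart.integrable (k+1)).sub (hmart.integrable k)
  have hΔsqint : Integrable (fun ω => Δ ω ^ 2) μ := by
    refine Integrable.mono' (integrable_const (d^2)) (hΔmeas.pow 2).aestronglyMeasurable ?_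
    filter_upwards [hjump] with ω hω
    rw [Real.norm_eq_abs, abs_pow]
    exact pow_le_pow_left₀ (abs_nonneg _) hω 2
  have hexpint : Integrable (fun ω => Real.exp (u * Δ ω)) μ := by
    refine Integrable.mono' (integrable_const (Real.exp (u*d)))
      ((Real.continuous_exp.comp (continuous_const.mul continuous_id)).comp_stronglyMeasurable hΔmeas).aestronglyMeasurable ?_
    filter_upwards [hjump] with ω hω
    rw [Real.norm_eq_abs, abs_of_pos (Real.exp_pos _), Real.exp_le_exp]
    exact mul_le_mul_of_nonneg_left ((abs_le.1 hω).2) hu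
  -- quadratic upper bound function
  set A : ℝ := Real.exp (u*a) * (1 - u*a + K*a^2) with hA
  set B : ℝ := Real.exp (u*a) * (u - 2*K*a) with hB
  set C : ℝ := Real.exp (u*a) * K with hC
  have hC0 : 0 ≤ C := mul_nonneg (Real.exp_nonneg _) hK0
  have hg_eq : (fun ω => A + (B * Δ ω + C * Δ ω ^ 2)) =
      fun ω => Real.exp (u*a) * (1 + u * (Δ ω - a) + K * (Δ ω - a)^2) := by
    funext ω; simp only [hA, hB, hC]; ring
  have hgint : Integrable (fun ω => A + (B * Δ ω + C * Δ ω ^ 2)) μ :=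
    (integrable_const A).add ((hΔint.const_mul B).add (hΔsqint.const_mul C))
  have hle : (fun ω => Real.exp (u * Δ ω)) ≤ᵐ[μ] fun ω => A + (B * Δ ω + C * Δ ω ^ 2) := by
    rw [hg_eq]
    filter_upwards [hjump] with ω hω
    have : Δ ω ≤ d := (abs_le.1 hω).2
    have hab : a ≤ d := by
      have : (0:ℝ) < σ^2/d := by positivity
      simp only [ha]; linarith
    simpa [hK] using key_pointwise hu hab this
  have hmono := condExp_mono hexpint hgint hle (m := ℱ k)
  -- condExp of the quadratic
  have hcond_lin : μ[Δ | ℱ k] =ᵐ[μ] 0 := by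
    have h1 : μ[X (k+1) | ℱ k] =ᵐ[μ] X k := hmart.condExp_ae_eq (Nat.le_succ k)
    have h2 : μ[X k | ℱ k] = X k :=
      condExp_of_stronglyMeasurable (ℱ.le k) (hmart.stronglyAdapted k) (hmart.integrable k)
    have := condExp_sub (μ := μ) (m := ℱ k) (hmart.integrable (k+1)) (hmart.integrable k)
    refine (condExp_congr_ae (by rfl)).trans (this.trans ?_)
    filter_upwards [h1] with ω hω
    simp [hω, h2]
  have hsplit : μ[fun ω => A + (B * Δ ω + C * Δ ω ^ 2) | ℱ k] =ᵐ[μ]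
      fun ω => A + (B * (μ[Δ | ℱ k]) ω + C * (μ[fun ω => Δ ω ^ 2 | ℱ k]) ω) := by
    have e1 : μ[fun ω => A + (B * Δ ω + C * Δ ω ^ 2) | ℱ k] =ᵐ[μ]
        μ[(fun _ => A : Ω → ℝ) | ℱ k] + μ[fun ω => B * Δ ω + C * Δ ω ^ 2 | ℱ k] :=
      condExp_add (μ := μ) (m := ℱ k) (f := fun _ => A)
        (g := fun ω => B * Δ ω + C * Δ ω ^ 2) (integrable_const A)
        ((hΔint.const_mul B).add (hΔsqint.const_mul C))
    have e2 : μ[fun ω => B * Δ ω + C * Δ ω ^ 2 | ℱ k] =ᵐ[μ]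
        μ[fun ω => B * Δ ω | ℱ k] + μ[fun ω => C * Δ ω ^ 2 | ℱ k] :=
      condExp_add (μ := μ) (m := ℱ k) (f := fun ω => B * Δ ω)
        (g := fun ω => C * Δ ω ^ 2) (hΔint.const_mul B) (hΔsqint.const_mul C)
    have e3 : μ[fun ω => B * Δ ω | ℱ k] =ᵐ[μ] fun ω => B * (μ[Δ | ℱ k]) ω := by
      simpa [Pi.smul_def, smul_eq_mul] using condExp_smul (μ := μ) (m := ℱ k) B Δ
    have e4 : μ[fun ω => C * Δ ω ^ 2 | ℱ k] =ᵐ[μ] fun ω => C * (μ[fun ω => Δ ω ^ 2 | ℱ k]) ω := by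
      simpa [Pi.smul_def, smul_eq_mul] using condExp_smul (μ := μ) (m := ℱ k) C (fun ω => Δ ω ^ 2)
    have ec : μ[(fun _ => A : Ω → ℝ) | ℱ k] = fun _ => A := condExp_const (ℱ.le k) A
    filter_upwards [e1, e2, e3, e4] with ω h1 h2 h3 h4
    rw [h1]
    simp only [Pi.add_apply, h2, h3, h4, ec]
  have halg := alg_ident u d σ hd hσ
  filter_upwards [hmono, hsplit, hcond_lin, hvar] with ω h1 h2 h3 h4
  have hfin : A + (B * 0 + C * (μ[fun ω => Δ ω ^ 2 | ℱ k]) ω) ≤ A + C * σ^2 := by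
    have := mul_le_mul_of_nonneg_left h4 hC0
    nlinarith
  have : (μ[fun ω => Real.exp (u * Δ ω) | ℱ k]) ω ≤ A + C * σ^2 := by
    calc (μ[fun ω => Real.exp (u * Δ ω) | ℱ k]) ω
        ≤ (μ[fun ω => A + (B * Δ ω + C * Δ ω ^ 2) | ℱ k]) ω := h1
      _ = A + (B * (μ[Δ | ℱ k]) ω + C * (μ[fun ω => Δ ω ^ 2 | ℱ k]) ω) := h2
      _ ≤ A + C * σ^2 := by rw [h3]; simpa using hfin
  refine this.trans ?_
  have heq : A + C * σ^2 = Real.exp (u * a) * (1 - u * a + K * (a^2 + σ^2)) := by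
    simp only [hA, hC]; ring
  rw [heq, hK, ha]
  exact halg.le

lemma mgf_le {Ω : Type*} {m0 : MeasurableSpace Ω} {μ : Measure Ω} [IsProbabilityMeasure μ]
    (ℱ : Filtration ℕ m0) (X : ℕ → Ω → ℝ) (hmart : Martingale X ℱ μ)
    (n : ℕ) (d σ u : ℝ) (hd : 0 < d) (hσ : 0 < σ) (hu : 0 ≤ u)
    (hjump : ∀ k, 1 ≤ k → k ≤ n → ∀ᵐ ω ∂μ, |X k ω - X (k - 1) ω| ≤ d)
    (hvar : ∀ k, 1 ≤ k → k ≤ n →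
      ∀ᵐ ω ∂μ, (μ[fun ω => (X k ω - X (k - 1) ω) ^ 2 | ℱ (k - 1)]) ω ≤ σ ^ 2) :
    Integrable (fun ω => Real.exp (u * (X n ω - X 0 ω))) μ ∧
    ∫ ω, Real.exp (u * (X n ω - X 0 ω)) ∂μ ≤
      (d^2/(d^2+σ^2) * Real.exp (u * (-(σ^2/d))) + σ^2/(d^2+σ^2) * Real.exp (u * d))^n := by
  set M : ℝ := d^2/(d^2+σ^2) * Real.exp (u * (-(σ^2/d))) + σ^2/(d^2+σ^2) * Real.exp (u * d)
    with hM
  have hM0 : 0 ≤ M := by positivity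
  have hub : ∀ k, k ≤ n → ∀ᵐ ω ∂μ, X k ω - X 0 ω ≤ k * d := by
    intro k
    induction k with
    | zero => intro _; filter_upwards with ω; simp
    | succ k ih =>
      intro hk
      have h1 := ih (Nat.le_of_succ_le hk)
      have h2 := hjump (k+1) (by omega) hk
      simp only [Nat.add_sub_cancel] at h2
      filter_upwards [h1, h2] with ω hω1 hω2
      have h3 := (abs_le.1 hω2).2
      push_cast
      linarith
  have hmeas : ∀ k, StronglyMeasurable[ℱ k] (fun ω => Real.exp (u * (X k ω - X 0 ω))) :=
    fun k => (((hmart.stronglyAdapted k).measurable.sub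
      (((hmart.stronglyAdapted 0).mono (ℱ.mono (Nat.zero_le k))).measurable)).const_mul u).exp.stronglyMeasurable
  have hint : ∀ k, k ≤ n → Integrable (fun ω => Real.exp (u * (X k ω - X 0 ω))) μ := by
    intro k hk
    refine Integrable.mono' (integrable_const (Real.exp (u * (k*d))))
      ((hmeas k).mono (ℱ.le k)).aestronglyMeasurable ?_
    filter_upwards [hub k hk] with ω hω
    rw [Real.norm_eq_abs, abs_of_pos (Real.exp_pos _), Real.exp_le_exp]
    exact mul_le_mul_of_nonneg_left hω hu
  have main : ∀ k, k ≤ n → ∫ ω, Real.exp (u * (X k ω - X 0 ω)) ∂μ ≤ M^k := by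
    intro k
    induction k with
    | zero => intro _; simp
    | succ k ih =>
      intro hk
      have hkn : k ≤ n := Nat.le_of_succ_le hk
      have hIH := ih hkn
      have hj := hjump (k+1) (by omega) hk
      simp only [Nat.add_sub_cancel] at hj
      have hv := hvar (k+1) (by omega) hk
      simp only [Nat.add_sub_cancel] at hv
      have hstep := step_bound ℱ X hmart d σ u hd hσ hu k hj hv
      set Y : Ω → ℝ := fun ω => Real.exp (u * (X k ω - X 0 ω)) with hY
      set E : Ω → ℝ := fun ω => Real.exp (u * (X (k+1) ω - X k ω)) with hE
      have hΔmeas : StronglyMeasurable (fun ω => X (k+1) ω - X k ω) :=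
        ((hmart.stronglyAdapted (k+1)).mono (ℱ.le _)).sub ((hmart.stronglyAdapted k).mono (ℱ.le _))
      have hEint : Integrable E μ := by
        refine Integrable.mono' (integrable_const (Real.exp (u*d)))
          ((hΔmeas.measurable.const_mul u).exp.stronglyMeasurable).aestronglyMeasurable ?_
        filter_upwards [hj] with ω hω
        rw [hE]
        rw [Real.norm_eq_abs, abs_of_pos (Real.exp_pos _), Real.exp_le_exp]
        exact mul_le_mul_of_nonneg_left ((abs_le.1 hω).2) hu
      have hprod_eq : (fun ω => Real.exp (u * (X (k+1) ω - X 0 ω))) = Y * E := by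
        funext ω
        simp only [Pi.mul_apply, hY, hE, ← Real.exp_add]
        ring_nf
      have hYbd : ∀ᵐ ω ∂μ, ‖Y ω‖ ≤ Real.exp (u*(k*d)) := by
        filter_upwards [hub k hkn] with ω hω
        rw [hY, Real.norm_eq_abs, abs_of_pos (Real.exp_pos _), Real.exp_le_exp]
        exact mul_le_mul_of_nonneg_left hω hu
      have hpull := condExp_stronglyMeasurable_mul_of_bound (ℱ.le k) (hmeas k) hEint
        (Real.exp (u*(k*d))) hYbd
      calc ∫ ω, Real.exp (u * (X (k+1) ω - X 0 ω)) ∂μ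
          = ∫ ω, (Y * E) ω ∂μ := by rw [hprod_eq]
        _ = ∫ ω, (μ[Y * E|ℱ k]) ω ∂μ := (integral_condExp (ℱ.le k)).symm
        _ ≤ ∫ ω, Y ω * M ∂μ := by
            refine integral_mono_ae integrable_condExp ((hint k hkn).mul_const M) ?_
            filter_upwards [hpull, hstep] with ω h1 h2
            rw [h1, Pi.mul_apply]
            exact mul_le_mul_of_nonneg_left h2 (Real.exp_nonneg _)
        _ = (∫ ω, Y ω ∂μ) * M := integral_mul_const M Y
        _ ≤ M^k * M := mul_le_mul_of_nonneg_right hIH hM0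
        _ = M^(k+1) := by ring
  exact ⟨hint n le_rfl, main n le_rfl⟩

lemma opt_ident (p s : ℝ) (hp0 : 0 < p) (hp1 : p < 1) (hs0 : 0 < s) (hs1 : s < 1) :
    Real.exp (-(Real.log (s*(1-p)/((1-s)*p)) * s)) *
      ((1-p) + p * Real.exp (Real.log (s*(1-p)/((1-s)*p)))) = Real.exp (-(binKL s p)) := by
  have h1s : (0:ℝ) < 1 - s := by linarith
  have h1p : (0:ℝ) < 1 - p := by linarith
  have hargpos : 0 < s*(1-p)/((1-s)*p) := div_pos (mul_pos hs0 h1p) (mul_pos h1s hp0)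
  rw [Real.exp_log hargpos]
  have hsum : (1-p) + p * (s*(1-p)/((1-s)*p)) = (1-p)/(1-s) := by
    field_simp
    ring
  rw [hsum]
  have hwexp : Real.log (s*(1-p)/((1-s)*p))
      = Real.log s + Real.log (1-p) - (Real.log (1-s) + Real.log p) := by
    rw [Real.log_div (by positivity) (by positivity),
      Real.log_mul (ne_of_gt hs0) (ne_of_gt h1p),
      Real.log_mul (ne_of_gt h1s) (ne_of_gt hp0)]
  have hKL : binKL s p = s*(Real.log s - Real.log p)
      + (1-s)*(Real.log (1-s) - Real.log (1-p)) := by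
    rw [binKL, Real.log_div (ne_of_gt hs0) (ne_of_gt hp0),
      Real.log_div (ne_of_gt h1s) (ne_of_gt h1p)]
  have hdivlog : (1-p)/(1-s) = Real.exp (Real.log (1-p) - Real.log (1-s)) := by
    rw [← Real.log_div (ne_of_gt h1p) (ne_of_gt h1s), Real.exp_log (div_pos h1p h1s)]
  rw [hdivlog, ← Real.exp_add]
  congr 1
  rw [hwexp, hKL]
  ring


/-- refined Azuma–Hoeffding inequality (one-sided) for martingales with
bounded jumps and bounded conditional variance. -/
theorem stmt_0 {Ω : Type*} {m0 : MeasurableSpace Ω} {μ : Measure Ω} [IsProbabilityMeasure μ]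
    (ℱ : Filtration ℕ m0) (X : ℕ → Ω → ℝ) (hmart : Martingale X ℱ μ)
    (n : ℕ) (d σ : ℝ) (hd : 0 < d) (hσ : 0 < σ)
    (hjump : ∀ k, 1 ≤ k → k ≤ n → ∀ᵐ ω ∂μ, |X k ω - X (k - 1) ω| ≤ d)
    (hvar : ∀ k, 1 ≤ k → k ≤ n →
      ∀ᵐ ω ∂μ, (μ[fun ω => (X k ω - X (k - 1) ω) ^ 2 | ℱ (k - 1)]) ω ≤ σ ^ 2)
    (α : ℝ) (hα : 0 ≤ α) (hδ : α / d ≤ 1) :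
    (μ {ω | (n : ℝ) * α ≤ X n ω - X 0 ω}).toReal ≤
      Real.exp (-(n : ℝ) *
        binKL ((α / d + σ ^ 2 / d ^ 2) / (1 + σ ^ 2 / d ^ 2))
          ((σ ^ 2 / d ^ 2) / (1 + σ ^ 2 / d ^ 2))) := by
  have hds : (0:ℝ) < d^2 + σ^2 := by positivity
  set p : ℝ := σ^2/(d^2+σ^2) with hp
  set s : ℝ := (α*d+σ^2)/(d^2+σ^2) with hs
  have hp0 : 0 < p := by positivity
  have hp1 : p < 1 := by rw [hp, div_lt_one hds]; nlinarith
  have hαd : α ≤ d := (div_le_one hd).mp hδ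
  have hsp : p ≤ s := by
    rw [hp, hs, div_le_div_iff_of_pos_right hds]
    nlinarith
  have hs0 : 0 < s := lt_of_lt_of_le hp0 hsp
  have hsrw : (α / d + σ ^ 2 / d ^ 2) / (1 + σ ^ 2 / d ^ 2) = s := by
    rw [hs]; field_simp; try ring
  have hprw : (σ ^ 2 / d ^ 2) / (1 + σ ^ 2 / d ^ 2) = p := by
    rw [hp]; field_simp; try ring
  rw [hsrw, hprw]
  have hprest : d^2/(d^2+σ^2) = 1 - p := by rw [hp]; field_simp; ring
  -- Chernoff bound for every u ≥ 0
  have chernoff : ∀ u : ℝ, 0 ≤ u →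
      (μ {ω | (n:ℝ)*α ≤ X n ω - X 0 ω}).toReal ≤
      (Real.exp (-(u*α)) *
        ((1-p) * Real.exp (u * (-(σ^2/d))) + p * Real.exp (u*d)))^n := by
    intro u hu
    obtain ⟨hint, hbound⟩ := mgf_le ℱ X hmart n d σ u hd hσ hu hjump hvar
    have h := ProbabilityTheory.measure_ge_le_exp_mul_mgf
      (X := fun ω => X n ω - X 0 ω) (μ := μ) ((n:ℝ)*α) hu hint
    refine h.trans ?_
    have hmgf : ProbabilityTheory.mgf (fun ω => X n ω - X 0 ω) μ u =
        ∫ ω, Real.exp (u * (X n ω - X 0 ω)) ∂μ := rfl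
    rw [hmgf]
    calc Real.exp (-u * ((n:ℝ)*α)) * ∫ ω, Real.exp (u * (X n ω - X 0 ω)) ∂μ
        ≤ Real.exp (-u * ((n:ℝ)*α)) *
          (d^2/(d^2+σ^2) * Real.exp (u * (-(σ^2/d))) + σ^2/(d^2+σ^2) * Real.exp (u * d))^n :=
          mul_le_mul_of_nonneg_left hbound (Real.exp_nonneg _)
      _ = (Real.exp (-(u*α)) * ((1-p) * Real.exp (u * (-(σ^2/d))) + p * Real.exp (u*d)))^n := by
          rw [hprest.symm, ← hp, mul_pow, ← Real.exp_nat_mul]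
          ring_nf
  rcases eq_or_lt_of_le hαd with heq | hlt
  · -- α = d, s = 1, limit argument
    have hs1 : s = 1 := by rw [hs, heq]; field_simp; try ring
    have hRHS : Real.exp (-(n:ℝ) * binKL s p) = p^n := by
      rw [hs1]
      have : binKL 1 p = -Real.log p := by
        simp [binKL, Real.log_div one_ne_zero (ne_of_gt hp0)]
      rw [this]
      rw [show -(n:ℝ) * -Real.log p = (n:ℝ) * Real.log p by ring, Real.exp_nat_mul,
        Real.exp_log hp0]
    rw [hRHS]
    have tends : Filter.Tendsto (fun w:ℝ => ((1-p) * Real.exp (-w) + p)^n)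
        Filter.atTop (nhds (p^n)) := by
      have h1 : Filter.Tendsto (fun w:ℝ => (1-p) * Real.exp (-w) + p)
          Filter.atTop (nhds p) := by
        have h0 := Real.tendsto_exp_neg_atTop_nhds_zero
        have := (h0.const_mul (1-p)).add_const p
        simpa using this
      exact h1.pow n
    refine ge_of_tendsto tends ?_
    filter_upwards [Filter.eventually_ge_atTop (0:ℝ)] with w hw
    set u : ℝ := w * d/(d^2+σ^2) with hu
    have hu0 : 0 ≤ u := by
      apply div_nonneg (mul_nonneg hw hd.le) hds.le
    refine (chernoff u hu0).trans ?_
    have hbase : Real.exp (-(u*α)) * ((1-p) * Real.exp (u * (-(σ^2/d))) + p * Real.exp (u*d))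
        = (1-p) * Real.exp (-w) + p := by
      have h1 : Real.exp (-(u*α)) * Real.exp (u * (-(σ^2/d))) = Real.exp (-w) := by
        rw [← Real.exp_add]
        congr 1
        rw [hu, heq]; field_simp; ring
      have h2 : Real.exp (-(u*α)) * Real.exp (u*d) = 1 := by
        rw [← Real.exp_add, heq, show -(u*d) + u*d = 0 by ring, Real.exp_zero]
      calc Real.exp (-(u*α)) * ((1-p) * Real.exp (u * (-(σ^2/d))) + p * Real.exp (u*d))
          = (1-p) * (Real.exp (-(u*α)) * Real.exp (u * (-(σ^2/d))))
            + p * (Real.exp (-(u*α)) * Real.exp (u*d)) := by ring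
        _ = (1-p) * Real.exp (-w) + p := by rw [h1, h2]; ring
    rw [hbase]
  · -- α < d, s < 1, exact optimization
    have hs1 : s < 1 := by rw [hs, div_lt_one hds]; nlinarith
    set w : ℝ := Real.log (s*(1-p)/((1-s)*p)) with hw
    have hargpos : 0 < s*(1-p)/((1-s)*p) :=
      div_pos (mul_pos hs0 (by linarith)) (mul_pos (by linarith) hp0)
    have hw0 : 0 ≤ w := by
      apply Real.log_nonneg
      rw [le_div_iff₀ (mul_pos (by linarith : (0:ℝ) < 1-s) hp0)]
      nlinarith
    set u : ℝ := w * d/(d^2+σ^2) with hu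
    have hu0 : 0 ≤ u := div_nonneg (mul_nonneg hw0 hd.le) hds.le
    refine (chernoff u hu0).trans ?_
    have hbase : Real.exp (-(u*α)) * ((1-p) * Real.exp (u * (-(σ^2/d))) + p * Real.exp (u*d))
        = Real.exp (-(binKL s p)) := by
      have h1 : -(u*α) + u * (-(σ^2/d)) = -(w*s) := by
        rw [hu, hs]; field_simp; ring
      have h2 : -(u*α) + u*d = -(w*s) + w := by
        rw [hu, hs]; field_simp; ring
      have e1 : Real.exp (-(u*α)) * Real.exp (u * (-(σ^2/d))) = Real.exp (-(w*s)) := by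
        rw [← Real.exp_add, h1]
      have e2 : Real.exp (-(u*α)) * Real.exp (u*d) = Real.exp (-(w*s)) * Real.exp w := by
        rw [← Real.exp_add, h2, Real.exp_add]
      calc Real.exp (-(u*α)) * ((1-p) * Real.exp (u * (-(σ^2/d))) + p * Real.exp (u*d))
          = (1-p) * (Real.exp (-(u*α)) * Real.exp (u * (-(σ^2/d))))
            + p * (Real.exp (-(u*α)) * Real.exp (u*d)) := by ring
        _ = Real.exp (-(w*s)) * ((1-p) + p * Real.exp w) := by rw [e1, e2]; ring
        _ = Real.exp (-(binKL s p)) := by rw [hw]; exact opt_ident p s hp0 hp1 hs0 hs1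
    rw [hbase, ← Real.exp_nat_mul]
    exact le_of_eq (by ring_nf)
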